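/- Let q be a prime power with q ≡ 1 (mod 4), and let u, v be distinct elements of F_q. Then the number of common neighbours of u and v in the Paley graph P(q), i.e. the cardinality of (S+u) ∩ (S+v) where S is the set of nonzero squares, equals (q − 3 − 2χ(u−v))/4; in particular it is (q−5)/4 if u−v ∈ S and (q−1)/4 if u−v ∉ S. -/

import Mathlib

open Finset

/-- Jacobi-type sum: `∑ x, χ(x) χ(x+a) = -1` for `a ≠ 0`. -/
lemma paley_sum_aux {F : Type*} [Field F] [Fintype F] [DecidableEq F]
    (hF : ringChar F ≠ 2) {a : F} (ha : a ≠ 0) :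
    ∑ x : F, quadraticChar F x * quadraticChar F (x + a) = -1 := by
  have h0 : ∑ x : F, quadraticChar F x * quadraticChar F (x + a)
      = ∑ x ∈ univ \ {(0 : F)}, quadraticChar F x * quadraticChar F (x + a) := by
    rw [Finset.sum_sdiff_eq_sub (Finset.subset_univ _)]
    simp
  rw [h0]
  have h1 : ∀ x ∈ univ \ {(0 : F)},
      quadraticChar F x * quadraticChar F (x + a) = quadraticChar F (1 + a * x⁻¹) := by
    intro x hx
    simp only [Finset.mem_sdiff, Finset.mem_singleton] at hx
    have hx0 : x ≠ 0 := hx.2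
    have : x + a = x * (1 + a * x⁻¹) := by field_simp
    rw [this, map_mul, ← mul_assoc, ← map_mul, ← sq,
      quadraticChar_sq_one' hx0, one_mul]
  rw [Finset.sum_congr rfl h1]
  have h2 : ∑ x ∈ univ \ {(0 : F)}, quadraticChar F (1 + a * x⁻¹)
      = ∑ t ∈ univ \ {(1 : F)}, quadraticChar F t := by
    apply Finset.sum_nbij' (fun x => 1 + a * x⁻¹) (fun t => a * (t - 1)⁻¹)
    · intro x hx
      simp only [Finset.mem_sdiff, Finset.mem_singleton, Finset.mem_univ, true_and] at hx ⊢
      intro h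
      apply hx
      have : a * x⁻¹ = 0 := by linear_combination h
      rcases mul_eq_zero.mp this with h' | h'
      · exact absurd h' ha
      · exact inv_eq_zero.mp h'
    · intro t ht
      simp only [Finset.mem_sdiff, Finset.mem_singleton, Finset.mem_univ, true_and] at ht ⊢
      intro h
      rcases mul_eq_zero.mp h with h' | h'
      · exact ha h'
      · exact ht (sub_eq_zero.mp (inv_eq_zero.mp h'))
    · intro x hx
      simp only [Finset.mem_sdiff, Finset.mem_singleton, Finset.mem_univ, true_and] at hx
      field_simp
      simp [ha]
    · intro t ht
      simp only [Finset.mem_sdiff, Finset.mem_singleton, Finset.mem_univ, true_and] at ht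
      have h1 : t - 1 ≠ 0 := sub_ne_zero.mpr ht
      field_simp
      ring
    · intro x hx; rfl
  rw [h2, Finset.sum_sdiff_eq_sub (Finset.subset_univ _),
    quadraticChar_sum_zero hF]
  simp

/-- For a prime power `q ≡ 1 (mod 4)` and distinct `u v ∈ F_q`, the number of common
neighbours of `u` and `v` in the Paley graph, i.e. `|(S+u) ∩ (S+v)|` where `S` is the set
of nonzero squares, equals `(q − 3 − 2χ(u−v))/4`; in particular it is `(q−5)/4` if
`u − v ∈ S` and `(q−1)/4` if `u − v ∉ S`. -/
theorem paley_common_neighbours {F : Type*} [Field F] [Fintype F] [DecidableEq F]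
    (h4 : Fintype.card F % 4 = 1)
    (S : Set F) (hS : S = {x : F | x ≠ 0 ∧ IsSquare x})
    {u v : F} (huv : u ≠ v) :
    4 * ((((· + u) '' S) ∩ ((· + v) '' S)).ncard : ℤ)
        = (Fintype.card F : ℤ) - 3 - 2 * quadraticChar F (u - v) ∧
    (u - v ∈ S →
      4 * ((((· + u) '' S) ∩ ((· + v) '' S)).ncard : ℤ) = (Fintype.card F : ℤ) - 5) ∧
    (u - v ∉ S →
      4 * ((((· + u) '' S) ∩ ((· + v) '' S)).ncard : ℤ) = (Fintype.card F : ℤ) - 1) := by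
  classical
  have hF : ringChar F ≠ 2 := by
    intro h
    have := FiniteField.even_card_of_char_two h
    omega
  set χ := quadraticChar F with hχ
  have hd : u - v ≠ 0 := sub_ne_zero.mpr huv
  have hneg1 : χ (-1) = 1 := by
    have hsq : IsSquare (-1 : F) := FiniteField.isSquare_neg_one_iff.mpr (by omega)
    exact (quadraticChar_one_iff_isSquare (by
      intro h
      exact one_ne_zero (neg_eq_zero.mp h))).mpr hsq
  -- χ(v-u) = χ(u-v)
  have hsym : χ (v - u) = χ (u - v) := by
    have : v - u = -1 * (u - v) := by ring
    rw [this, map_mul, hneg1, one_mul]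
  -- the intersection as a Finset
  set T : Finset F := univ.filter (fun x => χ (x - u) = 1 ∧ χ (x - v) = 1) with hT
  have hset : (((· + u) '' S) ∩ ((· + v) '' S)) = (T : Set F) := by
    ext x
    simp only [Set.mem_inter_iff, Set.mem_image, hS, Set.mem_setOf_eq, hT, Finset.coe_filter,
      Finset.mem_univ, true_and, Set.mem_setOf_eq]
    constructor
    · rintro ⟨⟨s, ⟨hs0, hssq⟩, hsx⟩, ⟨t, ⟨ht0, htsq⟩, htx⟩⟩
      have h1 : x - u = s := by linear_combination -hsx
      have h2 : x - v = t := by linear_combination -htx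
      rw [h1, h2]
      exact ⟨(quadraticChar_one_iff_isSquare hs0).mpr hssq,
        (quadraticChar_one_iff_isSquare ht0).mpr htsq⟩
    · rintro ⟨h1, h2⟩
      have h10 : x - u ≠ 0 := fun h => by simp [hχ, h] at h1
      have h20 : x - v ≠ 0 := fun h => by simp [hχ, h] at h2
      exact ⟨⟨x - u, ⟨h10, (quadraticChar_one_iff_isSquare h10).mp h1⟩, by ring⟩,
        ⟨x - v, ⟨h20, (quadraticChar_one_iff_isSquare h20).mp h2⟩, by ring⟩⟩
  have hncard : (((· + u) '' S) ∩ ((· + v) '' S)).ncard = T.card := by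
    rw [hset, Set.ncard_coe_finset]
  -- main sum computation
  set f : F → ℤ := fun x => (1 + χ (x - u)) * (1 + χ (x - v)) with hf
  have hsumf : ∑ x : F, f x = (Fintype.card F : ℤ) - 1 := by
    have e1 : ∑ x : F, (χ (x - u) : ℤ) = 0 := by
      rw [← quadraticChar_sum_zero hF]
      exact Fintype.sum_equiv (Equiv.subRight u) _ _ (fun x => rfl)
    have e2 : ∑ x : F, (χ (x - v) : ℤ) = 0 := by
      rw [← quadraticChar_sum_zero hF]
      exact Fintype.sum_equiv (Equiv.subRight v) _ _ (fun x => rfl)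
    have e3 : ∑ x : F, (χ (x - u) : ℤ) * χ (x - v) = -1 := by
      rw [← paley_sum_aux hF hd]
      apply Fintype.sum_equiv (Equiv.subRight u)
      intro x
      simp only [Equiv.subRight_apply]
      congr 2
      ring
    have : ∑ x : F, f x = ∑ x : F, (1 + (χ (x - u) : ℤ) + (χ (x - v) + χ (x - u) * χ (x - v))) := by
      apply Finset.sum_congr rfl
      intro x _
      simp only [hf]
      ring
    rw [this]
    simp only [Finset.sum_add_distrib, e1, e2, e3, Finset.sum_const, Finset.card_univ,
      nsmul_eq_mul, mul_one]
    ring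
  -- split the sum
  have huT : u ∉ T := by
    simp [hT, hχ, sub_self]
  have hvT : v ∉ T := by
    simp [hT, hχ, sub_self]
  have hsplit : ∑ x : F, f x = (∑ x ∈ T, f x) + f u + f v := by
    have hsub : T ∪ {u, v} ⊆ univ := Finset.subset_univ _
    rw [← Finset.sum_subset hsub]
    · have hdisj : Disjoint T ({u, v} : Finset F) := by
        rw [Finset.disjoint_right]
        intro x hx
        simp only [Finset.mem_insert, Finset.mem_singleton] at hx
        rcases hx with rfl | rfl
        · exact huT
        · exact hvT
      rw [Finset.sum_union hdisj, Finset.sum_pair huv]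
      ring
    · intro x _ hx
      simp only [Finset.mem_union, Finset.mem_insert, Finset.mem_singleton, hT,
        Finset.mem_filter, Finset.mem_univ, true_and, not_or] at hx
      obtain ⟨hxT, hxu, hxv⟩ := hx
      have h1 : x - u ≠ 0 := sub_ne_zero.mpr hxu
      have h2 : x - v ≠ 0 := sub_ne_zero.mpr hxv
      rcases not_and_or.mp hxT with h | h
      · rcases quadraticChar_dichotomy h1 with h' | h'
        · exact absurd h' h
        · show (1 + χ (x - u)) * (1 + χ (x - v)) = 0
          rw [show χ (x - u) = -1 from h']; ring
      · rcases quadraticChar_dichotomy h2 with h' | h'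
        · exact absurd h' h
        · show (1 + χ (x - u)) * (1 + χ (x - v)) = 0
          rw [show χ (x - v) = -1 from h']; ring
  have hfT : ∑ x ∈ T, f x = 4 * T.card := by
    have h4f : ∀ x ∈ T, f x = 4 := by
      intro x hx
      simp only [hT, Finset.mem_filter, Finset.mem_univ, true_and] at hx
      simp [hf, hx.1, hx.2]
    rw [Finset.sum_congr rfl h4f, Finset.sum_const, nsmul_eq_mul, mul_comm]
  have hfu : f u = 1 + χ (u - v) := by
    simp [hf, hχ, sub_self, hsym]
  have hfv : f v = 1 + χ (u - v) := by
    have h : f v = (1 + χ (v - u)) * (1 + χ (v - v)) := rfl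
    rw [h, sub_self, hsym]
    simp [hχ]
  have key : 4 * (T.card : ℤ) = (Fintype.card F : ℤ) - 3 - 2 * χ (u - v) := by
    have := hsplit
    rw [hsumf, hfT, hfu, hfv] at this
    push_cast at this ⊢
    linarith
  rw [hncard]
  refine ⟨key, ?_, ?_⟩
  · intro hmem
    rw [hS, Set.mem_setOf_eq] at hmem
    have : χ (u - v) = 1 := (quadraticChar_one_iff_isSquare hmem.1).mpr hmem.2
    rw [key, this]; push_cast; ring
  · intro hmem
    rw [hS, Set.mem_setOf_eq] at hmem
    have hnsq : ¬IsSquare (u - v) := fun h => hmem ⟨hd, h⟩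
    have : χ (u - v) = -1 := quadraticChar_neg_one_iff_not_isSquare.mpr hnsq
    rw [key, this]; push_cast; ring
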